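/- Let f be a defective probability generating function with smallest fixed point q in [0,1] and gamma = f'(q) > 0. Define h(s) = (f(s) - q)/((s - q) * gamma) for s in [0,1] with s != q, extended by h(q) = 1. Then: (i) for every s in [0,1] the infinite product H(s) = prod_{j=0}^infty h(f(j,s)) converges (where f(j,·) denotes the j-th iterate of f); (ii) H(q) = 1 and H(1) < infinity; (iii) H is representable on [0,1] as a power series with nonnegative coefficients; and (iv) for every s in [0,1], (f(t,s) - q)/gamma^t converges to (s - q) * H(s) as t tends to infinity. -/

import Mathlib

open Filter Finset


open Filter Finset ENNReal

namespace PGFAux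

noncomputable section

/-- `IsRep g c` : on `[0,1]`, `g` is represented by the (ENNReal) power series `c`. -/
def IsRep (g : ℝ → ℝ) (c : ℕ → ℝ≥0∞) : Prop :=
  ∀ x ∈ Set.Icc (0:ℝ) 1, ENNReal.ofReal (g x) = ∑' n, c n * (ENNReal.ofReal x) ^ n

theorem isRep_one : IsRep (fun _ => (1:ℝ)) (fun n => if n = 0 then 1 else 0) := by
  intro x hx
  have : ∀ n : ℕ, (if n = 0 then (1:ℝ≥0∞) else 0) * (ENNReal.ofReal x) ^ n
      = if n = 0 then (1:ℝ≥0∞) else 0 := by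
    intro n
    rcases Nat.eq_zero_or_pos n with h | h
    · simp [h]
    · simp [Nat.pos_iff_ne_zero.mp h]
  rw [tsum_congr this, tsum_ite_eq 0 (fun _ => (1:ℝ≥0∞))]
  simp

/-- Cauchy product of series. -/
def cmul (c d : ℕ → ℝ≥0∞) : ℕ → ℝ≥0∞ :=
  fun n => ∑ ij ∈ Finset.HasAntidiagonal.antidiagonal n, c ij.1 * d ij.2

theorem tsum_cmul (c d : ℕ → ℝ≥0∞) (X : ℝ≥0∞) :
    (∑' n, cmul c d n * X ^ n) = (∑' n, c n * X ^ n) * (∑' n, d n * X ^ n) := by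
  set G : ℕ × ℕ → ℝ≥0∞ := fun p => (c p.1 * X ^ p.1) * (d p.2 * X ^ p.2) with hG
  have : (∑' n, c n * X ^ n) * (∑' n, d n * X ^ n)
      = ∑' n, cmul c d n * X ^ n := by
    calc (∑' n, c n * X ^ n) * (∑' n, d n * X ^ n)
        = ∑' i, (c i * X ^ i) * (∑' n, d n * X ^ n) := (ENNReal.tsum_mul_right).symm
      _ = ∑' (i : ℕ) (j : ℕ), G (i, j) :=
          tsum_congr fun i => (ENNReal.tsum_mul_left).symm
      _ = ∑' (p : ℕ × ℕ), G p :=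
          (ENNReal.tsum_prod (f := fun i j => G (i, j))).symm
      _ = ∑' (σ : (n : ℕ) × {x // x ∈ Finset.HasAntidiagonal.antidiagonal n}),
            G (Finset.HasAntidiagonal.sigmaAntidiagonalEquivProd σ) :=
          (Finset.HasAntidiagonal.sigmaAntidiagonalEquivProd.tsum_eq (f := G)).symm
      _ = ∑' (σ : (n : ℕ) × {x // x ∈ Finset.HasAntidiagonal.antidiagonal n}), G σ.snd.val := by
          refine tsum_congr fun σ => ?_
          simp [Finset.HasAntidiagonal.sigmaAntidiagonalEquivProd]
      _ = ∑' (n : ℕ) (ij : {x // x ∈ Finset.HasAntidiagonal.antidiagonal n}), G ij.val :=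
          ENNReal.tsum_sigma (fun (n : ℕ) (ij : {x // x ∈ Finset.HasAntidiagonal.antidiagonal n}) => G ij.val)
      _ = ∑' n, cmul c d n * X ^ n := by
          refine tsum_congr fun n => ?_
          rw [Finset.tsum_subtype (Finset.HasAntidiagonal.antidiagonal n) (fun ij : ℕ × ℕ => G ij)]
          unfold cmul
          rw [Finset.sum_mul]
          refine Finset.sum_congr rfl fun ij hij => ?_
          have hn : ij.1 + ij.2 = n := Finset.HasAntidiagonal.mem_antidiagonal.mp hij
          rw [hG]
          simp only []
          rw [← hn, pow_add]
          ring
  exact this.symm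

theorem isRep_mul {g k : ℝ → ℝ} {c d : ℕ → ℝ≥0∞}
    (hg : IsRep g c) (hk : IsRep k d) (hg0 : ∀ x ∈ Set.Icc (0:ℝ) 1, 0 ≤ g x) :
    IsRep (fun x => g x * k x) (cmul c d) := by
  intro x hx
  rw [ENNReal.ofReal_mul (hg0 x hx), hg x hx, hk x hx, tsum_cmul]

/-- Cauchy powers of a series. -/
def cpow (d : ℕ → ℝ≥0∞) : ℕ → ℕ → ℝ≥0∞
  | 0 => fun n => if n = 0 then 1 else 0
  | (i+1) => cmul d (cpow d i)

theorem isRep_pow {F : ℝ → ℝ} {d : ℕ → ℝ≥0∞} (hF : IsRep F d)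
    (hmaps : ∀ x ∈ Set.Icc (0:ℝ) 1, F x ∈ Set.Icc (0:ℝ) 1) :
    ∀ i, IsRep (fun x => (F x) ^ i) (cpow d i) := by
  intro i
  induction i with
  | zero => simpa [cpow] using isRep_one
  | succ i ih =>
      have := isRep_mul hF ih (fun x hx => (hmaps x hx).1)
      intro x hx
      have h' := this x hx
      simpa [pow_succ, mul_comm, cpow] using h'

theorem isRep_comp {g F : ℝ → ℝ} {c d : ℕ → ℝ≥0∞}
    (hg : IsRep g c) (hF : IsRep F d)
    (hmaps : ∀ x ∈ Set.Icc (0:ℝ) 1, F x ∈ Set.Icc (0:ℝ) 1) :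
    IsRep (fun x => g (F x)) (fun n => ∑' i, c i * cpow d i n) := by
  intro x hx
  have h1 : ENNReal.ofReal (g (F x)) = ∑' i, c i * (ENNReal.ofReal (F x)) ^ i :=
    hg (F x) (hmaps x hx)
  have h2 : ∀ i : ℕ, (ENNReal.ofReal (F x)) ^ i = ∑' n, cpow d i n * (ENNReal.ofReal x) ^ n := by
    intro i
    rw [← ENNReal.ofReal_pow (hmaps x hx).1]
    exact isRep_pow hF hmaps i x hx
  rw [h1]
  calc (∑' i, c i * (ENNReal.ofReal (F x)) ^ i)
      = ∑' i, ∑' n, c i * (cpow d i n * (ENNReal.ofReal x) ^ n) := by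
        refine tsum_congr fun i => ?_
        rw [h2 i, ENNReal.tsum_mul_left]
    _ = ∑' n, ∑' i, c i * (cpow d i n * (ENNReal.ofReal x) ^ n) := ENNReal.tsum_comm
    _ = ∑' n, (∑' i, c i * cpow d i n) * (ENNReal.ofReal x) ^ n := by
        refine tsum_congr fun n => ?_
        rw [← ENNReal.tsum_mul_right]
        refine tsum_congr fun i => by ring

end

end PGFAux
namespace PGFAux

section Main

variable {p : ℕ → ℝ} {ε : ℝ} {f : ℝ → ℝ} {q γ : ℝ} {h : ℝ → ℝ}

theorem geom_aux {c : ℝ} (h0 : 0 ≤ c) (h1 : c < 1) (t : ℕ) :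
    ∑ j ∈ Finset.range t, c ^ j ≤ (1 - c)⁻¹ := by
  rw [geom_sum_eq (ne_of_lt h1) t]
  rw [div_eq_mul_inv, ← neg_sub 1 (c^t), ← neg_sub 1 c, mul_comm]
  rw [← neg_inv, mul_neg, neg_mul, neg_neg]
  have hpos : 0 < (1 - c)⁻¹ := inv_pos.mpr (by linarith)
  have : 1 - c ^ t ≤ 1 := by
    have : 0 ≤ c ^ t := pow_nonneg h0 t
    linarith
  calc (1-c)⁻¹ * (1 - c^t) ≤ (1-c)⁻¹ * 1 := by
        exact mul_le_mul_of_nonneg_left this (le_of_lt hpos)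
    _ = (1-c)⁻¹ := mul_one _

theorem sum_aux (hp : ∀ k, 0 ≤ p k) (hsum : Summable p) {x : ℝ}
    (hx : x ∈ Set.Icc (0:ℝ) 1) : Summable (fun k => p k * x ^ k) := by
  refine Summable.of_nonneg_of_le (fun k => mul_nonneg (hp k) (pow_nonneg hx.1 k))
    (fun k => ?_) hsum
  calc p k * x ^ k ≤ p k * 1 := by
        exact mul_le_mul_of_nonneg_left (pow_le_one₀ hx.1 hx.2) (hp k)
    _ = p k := mul_one _

theorem f_mono (hp : ∀ k, 0 ≤ p k) (hsum : Summable p)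
    (hf : ∀ s : ℝ, f s = ∑' k, p k * s ^ k) {x y : ℝ}
    (hx : x ∈ Set.Icc (0:ℝ) 1) (hy : y ∈ Set.Icc (0:ℝ) 1) (hxy : x ≤ y) : f x ≤ f y := by
  rw [hf x, hf y]
  refine Summable.tsum_le_tsum (fun k => ?_) (sum_aux hp hsum hx) (sum_aux hp hsum hy)
  exact mul_le_mul_of_nonneg_left (pow_le_pow_left₀ hx.1 hxy k) (hp k)

theorem f_maps (hp : ∀ k, 0 ≤ p k) (hε : ε ∈ Set.Ioo (0 : ℝ) 1) (hsum : HasSum p (1 - ε))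
    (hf : ∀ s : ℝ, f s = ∑' k, p k * s ^ k) {x : ℝ}
    (hx : x ∈ Set.Icc (0:ℝ) 1) : f x ∈ Set.Icc (0:ℝ) 1 := by
  constructor
  · rw [hf x]
    exact tsum_nonneg (fun k => mul_nonneg (hp k) (pow_nonneg hx.1 k))
  · have h1 : f 1 = 1 - ε := by
      rw [hf 1]; simpa using hsum.tsum_eq
    have := f_mono hp hsum.summable hf hx (Set.mem_Icc.mpr ⟨zero_le_one, le_refl 1⟩) hx.2
    rw [h1] at this
    linarith [hε.1]

end Main

end PGFAux
namespace PGFAux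

noncomputable def Dser (p : ℕ → ℝ) (q : ℝ) (x : ℝ) : ℝ :=
  ∑' k, p k * ∑ i ∈ Finset.range k, x ^ i * q ^ (k - 1 - i)

section MainD

variable {p : ℕ → ℝ} {ε : ℝ} {f : ℝ → ℝ} {q γ : ℝ} {h : ℝ → ℝ}

theorem Sk_nonneg (hq0 : 0 ≤ q) {x : ℝ} (hx0 : 0 ≤ x) (k : ℕ) :
    0 ≤ ∑ i ∈ Finset.range k, x ^ i * q ^ (k - 1 - i) :=
  Finset.sum_nonneg fun i _ => mul_nonneg (pow_nonneg hx0 i) (pow_nonneg hq0 _)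

theorem Sk_mono (hq0 : 0 ≤ q) {x y : ℝ} (hx0 : 0 ≤ x) (hxy : x ≤ y) (k : ℕ) :
    ∑ i ∈ Finset.range k, x ^ i * q ^ (k - 1 - i)
      ≤ ∑ i ∈ Finset.range k, y ^ i * q ^ (k - 1 - i) :=
  Finset.sum_le_sum fun i _ =>
    mul_le_mul_of_nonneg_right (pow_le_pow_left₀ hx0 hxy i) (pow_nonneg hq0 _)

theorem Sk_le (hq : q ∈ Set.Ico (0:ℝ) 1) {x : ℝ} (hx : x ∈ Set.Icc (0:ℝ) 1) (k : ℕ) :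
    ∑ i ∈ Finset.range k, x ^ i * q ^ (k - 1 - i) ≤ (1 - q)⁻¹ := by
  calc ∑ i ∈ Finset.range k, x ^ i * q ^ (k - 1 - i)
      ≤ ∑ i ∈ Finset.range k, q ^ (k - 1 - i) := by
        refine Finset.sum_le_sum fun i _ => ?_
        calc x ^ i * q ^ (k-1-i) ≤ 1 * q ^ (k-1-i) :=
              mul_le_mul_of_nonneg_right (pow_le_one₀ hx.1 hx.2) (pow_nonneg hq.1 _)
          _ = q ^ (k-1-i) := one_mul _
    _ = ∑ i ∈ Finset.range k, q ^ i := Finset.sum_range_reflect (fun i => q ^ i) k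
    _ ≤ (1 - q)⁻¹ := geom_aux hq.1 hq.2 k

theorem D_summable (hp : ∀ k, 0 ≤ p k) (hsum : Summable p) (hq : q ∈ Set.Ico (0:ℝ) 1)
    {x : ℝ} (hx : x ∈ Set.Icc (0:ℝ) 1) :
    Summable (fun k => p k * ∑ i ∈ Finset.range k, x ^ i * q ^ (k - 1 - i)) := by
  refine Summable.of_nonneg_of_le
    (fun k => mul_nonneg (hp k) (Sk_nonneg hq.1 hx.1 k))
    (fun k => mul_le_mul_of_nonneg_left (Sk_le hq hx k) (hp k))
    (hsum.mul_right (1 - q)⁻¹)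

theorem D_nonneg (hp : ∀ k, 0 ≤ p k) (hq0 : 0 ≤ q) {x : ℝ} (hx0 : 0 ≤ x) :
    0 ≤ Dser p q x :=
  tsum_nonneg fun k => mul_nonneg (hp k) (Sk_nonneg hq0 hx0 k)

theorem D_mono (hp : ∀ k, 0 ≤ p k) (hsum : Summable p) (hq : q ∈ Set.Ico (0:ℝ) 1)
    {x y : ℝ} (hx : x ∈ Set.Icc (0:ℝ) 1) (hy : y ∈ Set.Icc (0:ℝ) 1) (hxy : x ≤ y) :
    Dser p q x ≤ Dser p q y :=
  Summable.tsum_le_tsum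
    (fun k => mul_le_mul_of_nonneg_left (Sk_mono hq.1 hx.1 hxy k) (hp k))
    (D_summable hp hsum hq hx) (D_summable hp hsum hq hy)

theorem D_identity (hp : ∀ k, 0 ≤ p k) (hsum : Summable p) (hq : q ∈ Set.Ico (0:ℝ) 1)
    (hf : ∀ s : ℝ, f s = ∑' k, p k * s ^ k)
    {x : ℝ} (hx : x ∈ Set.Icc (0:ℝ) 1) :
    Dser p q x * (x - q) = f x - f q := by
  have hqI : q ∈ Set.Icc (0:ℝ) 1 := ⟨hq.1, le_of_lt hq.2⟩
  rw [Dser, ← tsum_mul_right]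
  have : ∀ k : ℕ, (p k * ∑ i ∈ Finset.range k, x ^ i * q ^ (k - 1 - i)) * (x - q)
      = p k * x ^ k - p k * q ^ k := by
    intro k
    rw [mul_assoc, geom_sum₂_mul x q k, mul_sub]
  rw [tsum_congr this, Summable.tsum_sub (sum_aux hp hsum hx) (sum_aux hp hsum hqI), hf x, hf q]

theorem D_chord (hp : ∀ k, 0 ≤ p k) (hsum : Summable p) (hq : q ∈ Set.Ico (0:ℝ) 1)
    {x : ℝ} (hx : x ∈ Set.Icc q 1) :
    Dser p q x ≤ (1-x)/(1-q) * Dser p q q + (x-q)/(1-q) * Dser p q 1 := by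
  have hq1 : (0:ℝ) < 1 - q := by linarith [hq.2]
  set a := (1-x)/(1-q) with ha
  set b := (x-q)/(1-q) with hb
  have ha0 : 0 ≤ a := div_nonneg (by linarith [hx.2]) (le_of_lt hq1)
  have hb0 : 0 ≤ b := div_nonneg (by linarith [hx.1]) (le_of_lt hq1)
  have hab : a + b = 1 := by rw [ha, hb]; field_simp; ring
  have hxc : a • q + b • 1 = x := by
    rw [smul_eq_mul, smul_eq_mul, ha, hb]
    field_simp
    ring
  have hqI : q ∈ Set.Icc (0:ℝ) 1 := ⟨hq.1, le_of_lt hq.2⟩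
  have hxI : x ∈ Set.Icc (0:ℝ) 1 := ⟨le_trans hq.1 hx.1, hx.2⟩
  have hpow : ∀ i : ℕ, x ^ i ≤ a * q ^ i + b * 1 ^ i := by
    intro i
    have := (convexOn_pow (𝕜 := ℝ) i).2 (Set.mem_Ici.mpr hq.1) (Set.mem_Ici.mpr zero_le_one)
      ha0 hb0 hab
    rw [hxc] at this
    simpa using this
  -- termwise chord bound
  have hSk : ∀ k : ℕ, p k * ∑ i ∈ Finset.range k, x ^ i * q ^ (k - 1 - i)
      ≤ a * (p k * ∑ i ∈ Finset.range k, q ^ i * q ^ (k - 1 - i))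
        + b * (p k * ∑ i ∈ Finset.range k, (1:ℝ) ^ i * q ^ (k - 1 - i)) := by
    intro k
    have step : ∑ i ∈ Finset.range k, x ^ i * q ^ (k - 1 - i)
        ≤ a * (∑ i ∈ Finset.range k, q ^ i * q ^ (k - 1 - i))
          + b * (∑ i ∈ Finset.range k, (1:ℝ) ^ i * q ^ (k - 1 - i)) := by
      rw [Finset.mul_sum, Finset.mul_sum, ← Finset.sum_add_distrib]
      refine Finset.sum_le_sum fun i _ => ?_
      have h1 : x ^ i * q ^ (k-1-i) ≤ (a * q ^ i + b * 1 ^ i) * q ^ (k-1-i) :=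
        mul_le_mul_of_nonneg_right (hpow i) (pow_nonneg hq.1 _)
      calc x ^ i * q ^ (k-1-i) ≤ (a * q ^ i + b * 1 ^ i) * q ^ (k-1-i) := h1
        _ = a * (q ^ i * q ^ (k-1-i)) + b * (1 ^ i * q ^ (k-1-i)) := by ring
    calc p k * ∑ i ∈ Finset.range k, x ^ i * q ^ (k - 1 - i)
        ≤ p k * (a * (∑ i ∈ Finset.range k, q ^ i * q ^ (k - 1 - i))
            + b * (∑ i ∈ Finset.range k, (1:ℝ) ^ i * q ^ (k - 1 - i))) :=
          mul_le_mul_of_nonneg_left step (hp k)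
      _ = _ := by ring
  have hsq := D_summable hp hsum hq hqI
  have hs1 := D_summable hp hsum hq (Set.mem_Icc.mpr ⟨zero_le_one, le_refl 1⟩)
  have hsx := D_summable hp hsum hq hxI
  have hsum2 : Summable (fun k => a * (p k * ∑ i ∈ Finset.range k, q ^ i * q ^ (k - 1 - i))
      + b * (p k * ∑ i ∈ Finset.range k, (1:ℝ) ^ i * q ^ (k - 1 - i))) :=
    ((hsq.mul_left a).add (hs1.mul_left b))
  calc Dser p q x ≤ ∑' k, (a * (p k * ∑ i ∈ Finset.range k, q ^ i * q ^ (k - 1 - i))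
        + b * (p k * ∑ i ∈ Finset.range k, (1:ℝ) ^ i * q ^ (k - 1 - i))) :=
        Summable.tsum_le_tsum hSk hsx hsum2
    _ = a * Dser p q q + b * Dser p q 1 := by
        rw [Summable.tsum_add (hsq.mul_left a) (hs1.mul_left b), tsum_mul_left, tsum_mul_left]
        rfl

end MainD

end PGFAux
namespace PGFAux

section MainE

variable {p : ℕ → ℝ} {ε : ℝ} {f : ℝ → ℝ} {q γ : ℝ} {h : ℝ → ℝ}

theorem D_contOn (hp : ∀ k, 0 ≤ p k) (hple : ∀ k, p k ≤ 1) (hq : q ∈ Set.Ico (0:ℝ) 1) :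
    ContinuousOn (Dser p q) (Set.Icc 0 ((1+q)/2)) := by
  set r := (1+q)/2 with hr
  have hr0 : 0 ≤ r := by rw [hr]; linarith [hq.1]
  have hr1 : r < 1 := by rw [hr]; linarith [hq.2]
  have hqr : q ≤ r := by rw [hr]; linarith [hq.2]
  have hu : Summable (fun k : ℕ => (k:ℝ) * r ^ (k-1)) := by
    rw [← summable_nat_add_iff 1]
    have h1 : Summable (fun n : ℕ => ((n:ℝ))^(1:ℕ) * r ^ n) :=
      summable_pow_mul_geometric_of_norm_lt_one 1 (by rwa [Real.norm_eq_abs, abs_of_nonneg hr0])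
    have h2 : Summable (fun n : ℕ => r ^ n) := summable_geometric_of_lt_one hr0 hr1
    have := h1.add h2
    refine this.congr fun n => ?_
    push_cast
    ring
  refine continuousOn_tsum (fun k => ?_) hu (fun k x hx => ?_)
  · exact (continuous_const.mul
      (continuous_finset_sum _ fun i _ => (continuous_pow i).mul continuous_const)).continuousOn
  · have hx0 : 0 ≤ x := hx.1
    have hxr : x ≤ r := hx.2
    have hSb : ∑ i ∈ Finset.range k, x ^ i * q ^ (k - 1 - i) ≤ (k:ℝ) * r ^ (k-1) := by
      calc ∑ i ∈ Finset.range k, x ^ i * q ^ (k - 1 - i)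
          ≤ ∑ i ∈ Finset.range k, r ^ (k-1) := by
            refine Finset.sum_le_sum fun i hi => ?_
            have hik : i + (k - 1 - i) = k - 1 := by
              have := Finset.mem_range.mp hi; omega
            calc x ^ i * q ^ (k-1-i) ≤ r ^ i * r ^ (k-1-i) :=
                  mul_le_mul (pow_le_pow_left₀ hx0 hxr i)
                    (pow_le_pow_left₀ hq.1 hqr _) (pow_nonneg hq.1 _) (pow_nonneg hr0 i)
              _ = r ^ (k-1) := by rw [← pow_add, hik]
        _ = (k:ℝ) * r ^ (k-1) := by
            rw [Finset.sum_const, Finset.card_range, nsmul_eq_mul]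
    rw [Real.norm_eq_abs, abs_of_nonneg (mul_nonneg (hp k) (Sk_nonneg hq.1 hx0 k))]
    calc p k * ∑ i ∈ Finset.range k, x ^ i * q ^ (k - 1 - i)
        ≤ 1 * ((k:ℝ) * r ^ (k-1)) := by
          exact mul_le_mul (hple k) hSb (Sk_nonneg hq.1 hx0 k) zero_le_one
      _ = (k:ℝ) * r ^ (k-1) := one_mul _

theorem D_q (hp : ∀ k, 0 ≤ p k) (hple : ∀ k, p k ≤ 1) (hsum : Summable p)
    (hq : q ∈ Set.Ico (0:ℝ) 1) (hf : ∀ s : ℝ, f s = ∑' k, p k * s ^ k)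
    (hγ : γ = deriv f q) (hγpos : 0 < γ) : Dser p q q = γ := by
  set r := (1+q)/2 with hr
  have hqr : q < r := by rw [hr]; linarith [hq.2]
  have hr1 : r < 1 := by rw [hr]; linarith [hq.2]
  -- the filter
  have hIoo : Set.Ioi q ∩ Set.Iio r = Set.Ioo q r := Set.Ioi_inter_Iio
  have hmem : Set.Iio r ∈ nhdsWithin q (Set.Ioi q) :=
    mem_nhdsWithin_of_mem_nhds (Iio_mem_nhds hqr)
  have hfe : nhdsWithin q (Set.Ioo q r) = nhdsWithin q (Set.Ioi q) := by
    rw [← hIoo]; exact nhdsWithin_inter_of_mem' hmem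
  have hNB : (nhdsWithin q (Set.Ioo q r)).NeBot := by
    rw [hfe]; exact nhdsGT_neBot q
  -- T1 : D tends to D q
  have hsub : Set.Ioo q r ⊆ Set.Icc 0 r := fun x hx => ⟨le_trans hq.1 (le_of_lt hx.1), le_of_lt hx.2⟩
  have hqmem : q ∈ Set.Icc (0:ℝ) r := ⟨hq.1, le_of_lt hqr⟩
  have T1 : Filter.Tendsto (Dser p q) (nhdsWithin q (Set.Ioo q r)) (nhds (Dser p q q)) :=
    Filter.Tendsto.mono_left (D_contOn hp hple hq q hqmem) (nhdsWithin_mono q hsub)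
  -- T2 : D tends to γ
  have hdiff : HasDerivAt f γ q := by
    have hne : deriv f q ≠ 0 := by rw [← hγ]; exact ne_of_gt hγpos
    have := (differentiableAt_of_deriv_ne_zero hne).hasDerivAt
    rwa [← hγ] at this
  have hslope : Filter.Tendsto (slope f q) (nhdsWithin q {q}ᶜ) (nhds γ) :=
    hasDerivAt_iff_tendsto_slope.mp hdiff
  have hle : nhdsWithin q (Set.Ioo q r) ≤ nhdsWithin q {q}ᶜ :=
    nhdsWithin_mono q (fun x hx => by
      simp only [Set.mem_compl_iff, Set.mem_singleton_iff]
      exact ne_of_gt hx.1)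
  have heq : ∀ᶠ x in nhdsWithin q (Set.Ioo q r), slope f q x = Dser p q x := by
    filter_upwards [eventually_mem_nhdsWithin] with x hx
    have hxI : x ∈ Set.Icc (0:ℝ) 1 :=
      ⟨le_trans hq.1 (le_of_lt hx.1), le_trans (le_of_lt hx.2) (le_of_lt hr1)⟩
    have hid := D_identity hp hsum hq hf hxI
    have hxq : x - q ≠ 0 := sub_ne_zero.mpr (ne_of_gt hx.1)
    rw [slope_def_field, ← hid, mul_div_assoc, div_self hxq, mul_one]
  have T2 : Filter.Tendsto (Dser p q) (nhdsWithin q (Set.Ioo q r)) (nhds γ) :=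
    Filter.Tendsto.congr' heq (hslope.mono_left hle)
  exact tendsto_nhds_unique T1 T2

theorem h_eq (hp : ∀ k, 0 ≤ p k) (hple : ∀ k, p k ≤ 1) (hsum : Summable p)
    (hq : q ∈ Set.Ico (0:ℝ) 1) (hf : ∀ s : ℝ, f s = ∑' k, p k * s ^ k) (hfix : f q = q)
    (hγ : γ = deriv f q) (hγpos : 0 < γ)
    (hh : ∀ s : ℝ, s ≠ q → h s = (f s - q) / ((s - q) * γ)) (hhq : h q = 1)
    {x : ℝ} (hx : x ∈ Set.Icc (0:ℝ) 1) : h x = Dser p q x / γ := by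
  rcases eq_or_ne x q with rfl | hne
  · rw [hhq, D_q hp hple hsum hq hf hγ hγpos, div_self (ne_of_gt hγpos)]
  · have hid := D_identity hp hsum hq hf hx
    rw [hfix] at hid
    have hxq : x - q ≠ 0 := sub_ne_zero.mpr hne
    have hγ0 : γ ≠ 0 := ne_of_gt hγpos
    rw [hh x hne, ← hid]
    field_simp [hxq, hγ0]
    try ring

end MainE

end PGFAux
namespace PGFAux

section MainF

variable {p : ℕ → ℝ} {ε : ℝ} {f : ℝ → ℝ} {q γ : ℝ} {h : ℝ → ℝ}

theorem h_nonneg (hp : ∀ k, 0 ≤ p k) (hple : ∀ k, p k ≤ 1) (hsum : Summable p)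
    (hq : q ∈ Set.Ico (0:ℝ) 1) (hf : ∀ s : ℝ, f s = ∑' k, p k * s ^ k) (hfix : f q = q)
    (hγ : γ = deriv f q) (hγpos : 0 < γ)
    (hh : ∀ s : ℝ, s ≠ q → h s = (f s - q) / ((s - q) * γ)) (hhq : h q = 1)
    {x : ℝ} (hx : x ∈ Set.Icc (0:ℝ) 1) : 0 ≤ h x := by
  rw [h_eq hp hple hsum hq hf hfix hγ hγpos hh hhq hx]
  exact div_nonneg (D_nonneg hp hq.1 hx.1) (le_of_lt hγpos)

theorem h_ge_one (hp : ∀ k, 0 ≤ p k) (hple : ∀ k, p k ≤ 1) (hsum : Summable p)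
    (hq : q ∈ Set.Ico (0:ℝ) 1) (hf : ∀ s : ℝ, f s = ∑' k, p k * s ^ k) (hfix : f q = q)
    (hγ : γ = deriv f q) (hγpos : 0 < γ)
    (hh : ∀ s : ℝ, s ≠ q → h s = (f s - q) / ((s - q) * γ)) (hhq : h q = 1)
    {x : ℝ} (hx : x ∈ Set.Icc q 1) : 1 ≤ h x := by
  have hxI : x ∈ Set.Icc (0:ℝ) 1 := ⟨le_trans hq.1 hx.1, hx.2⟩
  have hqI : q ∈ Set.Icc (0:ℝ) 1 := ⟨hq.1, le_of_lt hq.2⟩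
  rw [h_eq hp hple hsum hq hf hfix hγ hγpos hh hhq hxI]
  rw [le_div_iff₀ hγpos, one_mul]
  calc γ = Dser p q q := (D_q hp hple hsum hq hf hγ hγpos).symm
    _ ≤ Dser p q x := D_mono hp hsum hq hqI hxI hx.1

theorem h_le_one (hp : ∀ k, 0 ≤ p k) (hple : ∀ k, p k ≤ 1) (hsum : Summable p)
    (hq : q ∈ Set.Ico (0:ℝ) 1) (hf : ∀ s : ℝ, f s = ∑' k, p k * s ^ k) (hfix : f q = q)
    (hγ : γ = deriv f q) (hγpos : 0 < γ)
    (hh : ∀ s : ℝ, s ≠ q → h s = (f s - q) / ((s - q) * γ)) (hhq : h q = 1)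
    {x : ℝ} (hx : x ∈ Set.Icc (0:ℝ) q) : h x ≤ 1 := by
  have hxI : x ∈ Set.Icc (0:ℝ) 1 := ⟨hx.1, le_trans hx.2 (le_of_lt hq.2)⟩
  have hqI : q ∈ Set.Icc (0:ℝ) 1 := ⟨hq.1, le_of_lt hq.2⟩
  rw [h_eq hp hple hsum hq hf hfix hγ hγpos hh hhq hxI]
  rw [div_le_iff₀ hγpos, one_mul]
  calc Dser p q x ≤ Dser p q q := D_mono hp hsum hq hxI hqI hx.2
    _ = γ := D_q hp hple hsum hq hf hγ hγpos

theorem h_chord (hp : ∀ k, 0 ≤ p k) (hple : ∀ k, p k ≤ 1) (hsum : Summable p)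
    (hq : q ∈ Set.Ico (0:ℝ) 1) (hf : ∀ s : ℝ, f s = ∑' k, p k * s ^ k) (hfix : f q = q)
    (hγ : γ = deriv f q) (hγpos : 0 < γ)
    (hh : ∀ s : ℝ, s ≠ q → h s = (f s - q) / ((s - q) * γ)) (hhq : h q = 1)
    {x : ℝ} (hx : x ∈ Set.Icc q 1) :
    h x ≤ 1 + (x - q) * ((h 1 - 1) / (1 - q)) := by
  have hq1 : (0:ℝ) < 1 - q := by linarith [hq.2]
  have hxI : x ∈ Set.Icc (0:ℝ) 1 := ⟨le_trans hq.1 hx.1, hx.2⟩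
  have h1I : (1:ℝ) ∈ Set.Icc (0:ℝ) 1 := ⟨zero_le_one, le_refl 1⟩
  have hDq : Dser p q q = γ := D_q hp hple hsum hq hf hγ hγpos
  have hchord := D_chord hp hsum hq hx
  have hhx : h x = Dser p q x / γ := h_eq hp hple hsum hq hf hfix hγ hγpos hh hhq hxI
  have hh1 : h 1 = Dser p q 1 / γ := h_eq hp hple hsum hq hf hfix hγ hγpos hh hhq h1I
  rw [hhx, div_le_iff₀ hγpos]
  have hD1 : Dser p q 1 = γ * h 1 := by
    rw [hh1, mul_div_assoc', mul_comm, mul_div_assoc, div_self (ne_of_gt hγpos), mul_one]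
  calc Dser p q x ≤ (1-x)/(1-q) * Dser p q q + (x-q)/(1-q) * Dser p q 1 := hchord
    _ = (1-x)/(1-q) * γ + (x-q)/(1-q) * (γ * h 1) := by rw [hDq, hD1]
    _ = (1 + (x - q) * ((h 1 - 1) / (1 - q))) * γ := by
        field_simp
        ring

theorem iter_I (hp : ∀ k, 0 ≤ p k) (hε : ε ∈ Set.Ioo (0 : ℝ) 1) (hsum : HasSum p (1 - ε))
    (hf : ∀ s : ℝ, f s = ∑' k, p k * s ^ k) {s : ℝ} (hs : s ∈ Set.Icc (0:ℝ) 1) :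
    ∀ j, f^[j] s ∈ Set.Icc (0:ℝ) 1 := by
  intro j
  induction j with
  | zero => simpa using hs
  | succ j ih =>
      rw [Function.iterate_succ_apply']
      exact f_maps hp hε hsum hf ih

theorem iter_q1 (hp : ∀ k, 0 ≤ p k) (hε : ε ∈ Set.Ioo (0 : ℝ) 1) (hsum : HasSum p (1 - ε))
    (hq : q ∈ Set.Ico (0:ℝ) 1) (hf : ∀ s : ℝ, f s = ∑' k, p k * s ^ k) (hfix : f q = q)
    {s : ℝ} (hs : s ∈ Set.Icc q 1) :
    ∀ j, f^[j] s ∈ Set.Icc q 1 ∧ f^[j] s - q ≤ (Dser p q 1) ^ j * (s - q) := by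
  have hqI : q ∈ Set.Icc (0:ℝ) 1 := ⟨hq.1, le_of_lt hq.2⟩
  have h1I : (1:ℝ) ∈ Set.Icc (0:ℝ) 1 := ⟨zero_le_one, le_refl 1⟩
  intro j
  induction j with
  | zero => constructor
            · simpa using hs
            · simp
  | succ j ih =>
      obtain ⟨hmem, hbd⟩ := ih
      have hjI : f^[j] s ∈ Set.Icc (0:ℝ) 1 := ⟨le_trans hq.1 hmem.1, hmem.2⟩
      have hfj : f (f^[j] s) ∈ Set.Icc (0:ℝ) 1 := f_maps hp hε hsum hf hjI
      have hge : q ≤ f (f^[j] s) := by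
        have := f_mono hp hsum.summable hf hqI hjI hmem.1
        rwa [hfix] at this
      constructor
      · rw [Function.iterate_succ_apply']
        exact ⟨hge, hfj.2⟩
      · rw [Function.iterate_succ_apply']
        have h5 := D_identity hp hsum.summable hq hf hjI
        rw [hfix] at h5
        have hDle : Dser p q (f^[j] s) ≤ Dser p q 1 :=
          D_mono hp hsum.summable hq hjI h1I hjI.2
        have hsq : 0 ≤ f^[j] s - q := by linarith [hmem.1]
        have hc0 : 0 ≤ Dser p q 1 := D_nonneg hp hq.1 zero_le_one
        calc f (f^[j] s) - q = Dser p q (f^[j] s) * (f^[j] s - q) := h5.symm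
          _ ≤ Dser p q 1 * (f^[j] s - q) := mul_le_mul_of_nonneg_right hDle hsq
          _ ≤ Dser p q 1 * ((Dser p q 1) ^ j * (s - q)) := mul_le_mul_of_nonneg_left hbd hc0
          _ = (Dser p q 1) ^ (j+1) * (s - q) := by ring

theorem iter_0q (hp : ∀ k, 0 ≤ p k) (hε : ε ∈ Set.Ioo (0 : ℝ) 1) (hsum : HasSum p (1 - ε))
    (hq : q ∈ Set.Ico (0:ℝ) 1) (hf : ∀ s : ℝ, f s = ∑' k, p k * s ^ k) (hfix : f q = q)
    {s : ℝ} (hs : s ∈ Set.Icc (0:ℝ) q) :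
    ∀ j, f^[j] s ∈ Set.Icc (0:ℝ) q := by
  have hqI : q ∈ Set.Icc (0:ℝ) 1 := ⟨hq.1, le_of_lt hq.2⟩
  intro j
  induction j with
  | zero => simpa using hs
  | succ j ih =>
      have hjI : f^[j] s ∈ Set.Icc (0:ℝ) 1 := ⟨ih.1, le_trans ih.2 (le_of_lt hq.2)⟩
      rw [Function.iterate_succ_apply']
      constructor
      · exact (f_maps hp hε hsum hf hjI).1
      · have := f_mono hp hsum.summable hf hjI hqI ih.2
        rwa [hfix] at this

theorem iter_fix (hfix : f q = q) : ∀ j, f^[j] q = q := by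
  intro j
  induction j with
  | zero => simp
  | succ j ih => rw [Function.iterate_succ_apply', ih, hfix]

theorem c_lt_one (hp : ∀ k, 0 ≤ p k) (hε : ε ∈ Set.Ioo (0 : ℝ) 1) (hsum : HasSum p (1 - ε))
    (hq : q ∈ Set.Ico (0:ℝ) 1) (hf : ∀ s : ℝ, f s = ∑' k, p k * s ^ k) (hfix : f q = q) :
    Dser p q 1 < 1 := by
  have hq1 : (0:ℝ) < 1 - q := by linarith [hq.2]
  have h1I : (1:ℝ) ∈ Set.Icc (0:ℝ) 1 := ⟨zero_le_one, le_refl 1⟩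
  have hid := D_identity hp hsum.summable hq hf h1I
  have hf1 : f 1 = 1 - ε := by rw [hf 1]; simpa using hsum.tsum_eq
  rw [hfix, hf1] at hid
  have : Dser p q 1 * (1 - q) < 1 * (1 - q) := by
    rw [hid, one_mul]
    linarith [hε.1]
  exact lt_of_mul_lt_mul_right this (le_of_lt hq1)

end MainF

end PGFAux
namespace PGFAux

section MainG

variable {p : ℕ → ℝ} {ε : ℝ} {f : ℝ → ℝ} {q γ : ℝ} {h : ℝ → ℝ}

theorem P_nonneg (hp : ∀ k, 0 ≤ p k) (hple : ∀ k, p k ≤ 1) (hε : ε ∈ Set.Ioo (0 : ℝ) 1)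
    (hsum : HasSum p (1 - ε)) (hq : q ∈ Set.Ico (0:ℝ) 1)
    (hf : ∀ s : ℝ, f s = ∑' k, p k * s ^ k) (hfix : f q = q)
    (hγ : γ = deriv f q) (hγpos : 0 < γ)
    (hh : ∀ s : ℝ, s ≠ q → h s = (f s - q) / ((s - q) * γ)) (hhq : h q = 1)
    {s : ℝ} (hs : s ∈ Set.Icc (0:ℝ) 1) (t : ℕ) :
    0 ≤ ∏ j ∈ Finset.range t, h (f^[j] s) :=
  Finset.prod_nonneg fun j _ =>
    h_nonneg hp hple hsum.summable hq hf hfix hγ hγpos hh hhq (iter_I hp hε hsum hf hs j)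

theorem P_mono_q1 (hp : ∀ k, 0 ≤ p k) (hple : ∀ k, p k ≤ 1) (hε : ε ∈ Set.Ioo (0 : ℝ) 1)
    (hsum : HasSum p (1 - ε)) (hq : q ∈ Set.Ico (0:ℝ) 1)
    (hf : ∀ s : ℝ, f s = ∑' k, p k * s ^ k) (hfix : f q = q)
    (hγ : γ = deriv f q) (hγpos : 0 < γ)
    (hh : ∀ s : ℝ, s ≠ q → h s = (f s - q) / ((s - q) * γ)) (hhq : h q = 1)
    {s : ℝ} (hs : s ∈ Set.Icc q 1) :
    Monotone (fun t => ∏ j ∈ Finset.range t, h (f^[j] s)) := by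
  have hsI : s ∈ Set.Icc (0:ℝ) 1 := ⟨le_trans hq.1 hs.1, hs.2⟩
  refine monotone_nat_of_le_succ fun t => ?_
  rw [Finset.prod_range_succ]
  refine le_mul_of_one_le_right (P_nonneg hp hple hε hsum hq hf hfix hγ hγpos hh hhq hsI t) ?_
  exact h_ge_one hp hple hsum.summable hq hf hfix hγ hγpos hh hhq
    (iter_q1 hp hε hsum hq hf hfix hs t).1

theorem P_bdd_q1 (hp : ∀ k, 0 ≤ p k) (hple : ∀ k, p k ≤ 1) (hε : ε ∈ Set.Ioo (0 : ℝ) 1)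
    (hsum : HasSum p (1 - ε)) (hq : q ∈ Set.Ico (0:ℝ) 1)
    (hf : ∀ s : ℝ, f s = ∑' k, p k * s ^ k) (hfix : f q = q)
    (hγ : γ = deriv f q) (hγpos : 0 < γ)
    (hh : ∀ s : ℝ, s ≠ q → h s = (f s - q) / ((s - q) * γ)) (hhq : h q = 1)
    {s : ℝ} (hs : s ∈ Set.Icc q 1) (t : ℕ) :
    ∏ j ∈ Finset.range t, h (f^[j] s)
      ≤ Real.exp ((h 1 - 1) / (1 - q) * (1 - Dser p q 1)⁻¹) := by
  have hq1 : (0:ℝ) < 1 - q := by linarith [hq.2]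
  have hsI : s ∈ Set.Icc (0:ℝ) 1 := ⟨le_trans hq.1 hs.1, hs.2⟩
  set c := Dser p q 1 with hc
  have hc0 : 0 ≤ c := D_nonneg hp hq.1 zero_le_one
  have hc1 : c < 1 := c_lt_one hp hε hsum hq hf hfix
  set C := (h 1 - 1) / (1 - q) with hC
  have hC0 : 0 ≤ C := by
    have h11 : 1 ≤ h 1 := h_ge_one hp hple hsum.summable hq hf hfix hγ hγpos hh hhq
      ⟨le_of_lt hq.2, le_refl 1⟩
    exact div_nonneg (by linarith) (le_of_lt hq1)
  have hterm : ∀ j, h (f^[j] s) ≤ Real.exp (C * c ^ j) := by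
    intro j
    obtain ⟨hmem, hbd⟩ := iter_q1 hp hε hsum hq hf hfix hs j
    have step1 : h (f^[j] s) ≤ 1 + (f^[j] s - q) * C :=
      h_chord hp hple hsum.summable hq hf hfix hγ hγpos hh hhq hmem
    have hsq1 : s - q ≤ 1 := by linarith [hs.2, hq.1]
    have step2 : (f^[j] s - q) * C ≤ C * c ^ j := by
      have h1 : f^[j] s - q ≤ c ^ j * (s - q) := hbd
      have h2 : c ^ j * (s - q) ≤ c ^ j * 1 :=
        mul_le_mul_of_nonneg_left hsq1 (pow_nonneg hc0 j)
      calc (f^[j] s - q) * C ≤ (c ^ j * 1) * C :=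
            mul_le_mul_of_nonneg_right (le_trans h1 h2) hC0
        _ = C * c ^ j := by ring
    calc h (f^[j] s) ≤ 1 + (f^[j] s - q) * C := step1
      _ ≤ 1 + C * c ^ j := by linarith
      _ ≤ Real.exp (C * c ^ j) := by
          have := Real.add_one_le_exp (C * c ^ j)
          linarith
  calc ∏ j ∈ Finset.range t, h (f^[j] s)
      ≤ ∏ j ∈ Finset.range t, Real.exp (C * c ^ j) := by
        refine Finset.prod_le_prod (fun j _ => ?_) (fun j _ => hterm j)
        exact h_nonneg hp hple hsum.summable hq hf hfix hγ hγpos hh hhq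
          (iter_I hp hε hsum hf hsI j)
    _ = Real.exp (∑ j ∈ Finset.range t, C * c ^ j) := (Real.exp_sum _ _).symm
    _ ≤ Real.exp (C * (1 - c)⁻¹) := by
        rw [Real.exp_le_exp, ← Finset.mul_sum]
        exact mul_le_mul_of_nonneg_left (geom_aux hc0 hc1 t) hC0

theorem P_conv (hp : ∀ k, 0 ≤ p k) (hple : ∀ k, p k ≤ 1) (hε : ε ∈ Set.Ioo (0 : ℝ) 1)
    (hsum : HasSum p (1 - ε)) (hq : q ∈ Set.Ico (0:ℝ) 1)
    (hf : ∀ s : ℝ, f s = ∑' k, p k * s ^ k) (hfix : f q = q)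
    (hγ : γ = deriv f q) (hγpos : 0 < γ)
    (hh : ∀ s : ℝ, s ≠ q → h s = (f s - q) / ((s - q) * γ)) (hhq : h q = 1)
    {s : ℝ} (hs : s ∈ Set.Icc (0:ℝ) 1) :
    ∃ L, Filter.Tendsto (fun t => ∏ j ∈ Finset.range t, h (f^[j] s)) atTop (nhds L) := by
  rcases le_or_gt s q with hsq | hsq
  · -- s ∈ [0,q] : antitone, bounded below
    have hs0q : s ∈ Set.Icc (0:ℝ) q := ⟨hs.1, hsq⟩
    have hanti : Antitone (fun t => ∏ j ∈ Finset.range t, h (f^[j] s)) := by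
      refine antitone_nat_of_succ_le fun t => ?_
      rw [Finset.prod_range_succ]
      refine mul_le_of_le_one_right (P_nonneg hp hple hε hsum hq hf hfix hγ hγpos hh hhq hs t) ?_
      exact h_le_one hp hple hsum.summable hq hf hfix hγ hγpos hh hhq
        (iter_0q hp hε hsum hq hf hfix hs0q t)
    have hbdd : BddBelow (Set.range (fun t => ∏ j ∈ Finset.range t, h (f^[j] s))) := by
      refine ⟨0, ?_⟩
      rintro y ⟨t, rfl⟩
      exact P_nonneg hp hple hε hsum hq hf hfix hγ hγpos hh hhq hs t
    exact ⟨_, tendsto_atTop_ciInf hanti hbdd⟩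
  · have hsq1 : s ∈ Set.Icc q 1 := ⟨le_of_lt hsq, hs.2⟩
    have hbdd : BddAbove (Set.range (fun t => ∏ j ∈ Finset.range t, h (f^[j] s))) := by
      refine ⟨Real.exp ((h 1 - 1) / (1 - q) * (1 - Dser p q 1)⁻¹), ?_⟩
      rintro y ⟨t, rfl⟩
      exact P_bdd_q1 hp hple hε hsum hq hf hfix hγ hγpos hh hhq hsq1 t
    exact ⟨_, tendsto_atTop_ciSup
      (P_mono_q1 hp hple hε hsum hq hf hfix hγ hγpos hh hhq hsq1) hbdd⟩

end MainG

end PGFAux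
namespace PGFAux

section MainH

variable {p : ℕ → ℝ} {ε : ℝ} {f : ℝ → ℝ} {q γ : ℝ} {h : ℝ → ℝ}

theorem key_identity (hp : ∀ k, 0 ≤ p k) (hple : ∀ k, p k ≤ 1) (hε : ε ∈ Set.Ioo (0 : ℝ) 1)
    (hsum : HasSum p (1 - ε)) (hq : q ∈ Set.Ico (0:ℝ) 1)
    (hf : ∀ s : ℝ, f s = ∑' k, p k * s ^ k) (hfix : f q = q)
    (hγ : γ = deriv f q) (hγpos : 0 < γ)
    (hh : ∀ s : ℝ, s ≠ q → h s = (f s - q) / ((s - q) * γ)) (hhq : h q = 1)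
    {s : ℝ} (hs : s ∈ Set.Icc (0:ℝ) 1) :
    ∀ t, f^[t] s - q = (s - q) * (γ ^ t * ∏ j ∈ Finset.range t, h (f^[j] s)) := by
  intro t
  induction t with
  | zero => simp
  | succ t ih =>
      have hjI : f^[t] s ∈ Set.Icc (0:ℝ) 1 := iter_I hp hε hsum hf hs t
      have hid := D_identity hp hsum.summable hq hf hjI
      rw [hfix] at hid
      have hDh : Dser p q (f^[t] s) = γ * h (f^[t] s) := by
        rw [h_eq hp hple hsum.summable hq hf hfix hγ hγpos hh hhq hjI,
          mul_div_assoc', mul_comm, mul_div_assoc, div_self (ne_of_gt hγpos), mul_one]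
      rw [Function.iterate_succ_apply', ← hid, hDh, ih, Finset.prod_range_succ]
      ring

theorem rep_f (hp : ∀ k, 0 ≤ p k) (hsum : Summable p)
    (hf : ∀ s : ℝ, f s = ∑' k, p k * s ^ k) :
    IsRep f (fun k => ENNReal.ofReal (p k)) := by
  intro x hx
  rw [hf x, ENNReal.ofReal_tsum_of_nonneg
    (fun k => mul_nonneg (hp k) (pow_nonneg hx.1 k)) (sum_aux hp hsum hx)]
  refine tsum_congr fun k => ?_
  rw [ENNReal.ofReal_mul (hp k), ENNReal.ofReal_pow hx.1]

theorem rep_h (hp : ∀ k, 0 ≤ p k) (hple : ∀ k, p k ≤ 1) (hsum : Summable p)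
    (hq : q ∈ Set.Ico (0:ℝ) 1) (hf : ∀ s : ℝ, f s = ∑' k, p k * s ^ k) (hfix : f q = q)
    (hγ : γ = deriv f q) (hγpos : 0 < γ)
    (hh : ∀ s : ℝ, s ≠ q → h s = (f s - q) / ((s - q) * γ)) (hhq : h q = 1) :
    IsRep h (fun n =>
      (∑' m, ENNReal.ofReal (p (n+1+m)) * (ENNReal.ofReal q) ^ m) / ENNReal.ofReal γ) := by
  intro x hx
  set X := ENNReal.ofReal x with hX
  set Q := ENNReal.ofReal q with hQ
  set oP : ℕ → ℝ≥0∞ := fun k => ENNReal.ofReal (p k) with hoP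
  set G : ℕ → ℕ → ℝ≥0∞ := fun k i => if i < k then oP k * X ^ i * Q ^ (k-1-i) else 0 with hG
  -- express ofReal (Dser p q x)
  have hDof : ENNReal.ofReal (Dser p q x) = ∑' k, ∑' i, G k i := by
    rw [Dser, ENNReal.ofReal_tsum_of_nonneg
      (fun k => mul_nonneg (hp k) (Sk_nonneg hq.1 hx.1 k)) (D_summable hp hsum hq hx)]
    refine tsum_congr fun k => ?_
    have h1 : ENNReal.ofReal (p k * ∑ i ∈ Finset.range k, x ^ i * q ^ (k - 1 - i))
        = oP k * ∑ i ∈ Finset.range k, X ^ i * Q ^ (k-1-i) := by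
      rw [ENNReal.ofReal_mul (hp k)]
      congr 1
      rw [ENNReal.ofReal_sum_of_nonneg
        (fun i _ => mul_nonneg (pow_nonneg hx.1 i) (pow_nonneg hq.1 _))]
      refine Finset.sum_congr rfl fun i _ => ?_
      rw [ENNReal.ofReal_mul (pow_nonneg hx.1 i), ENNReal.ofReal_pow hx.1,
        ENNReal.ofReal_pow hq.1]
    rw [h1, Finset.mul_sum]
    have h2 : ∑' i, G k i = ∑ i ∈ Finset.range k, G k i :=
      tsum_eq_sum (fun i hi => by
        have : ¬ i < k := by simpa using hi
        simp only [hG, if_neg this])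
    rw [h2]
    refine Finset.sum_congr rfl fun i hi => ?_
    have : i < k := Finset.mem_range.mp hi
    simp only [hG, if_pos this]
    ring
  -- Fubini and reindexing
  have hswap : ∑' k, ∑' i, G k i = ∑' i, ∑' k, G k i := ENNReal.tsum_comm
  have hinner : ∀ i, ∑' k, G k i = (∑' m, oP (i+1+m) * Q ^ m) * X ^ i := by
    intro i
    have hinj : Function.Injective (fun m : ℕ => i+1+m) := by
      intro a b hab
      dsimp only at hab
      omega
    have hsupp : Function.support (fun k => G k i) ⊆ Set.range (fun m : ℕ => i+1+m) := by
      intro k hk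
      have hik : i < k := by
        by_contra hcon
        exact hk (by simp only [hG, if_neg hcon])
      exact ⟨k - (i+1), by dsimp only; omega⟩
    have h3 : ∑' m, G (i+1+m) i = ∑' k, G k i := hinj.tsum_eq hsupp
    rw [← h3]
    have h4 : ∀ m : ℕ, G (i+1+m) i = (oP (i+1+m) * Q ^ m) * X ^ i := by
      intro m
      have hlt : i < i+1+m := by omega
      have hexp : i+1+m-1-i = m := by omega
      simp only [hG, if_pos hlt, hexp]
      ring
    rw [tsum_congr h4, ENNReal.tsum_mul_right]
  -- put together
  have hhx : h x = Dser p q x / γ := h_eq hp hple hsum hq hf hfix hγ hγpos hh hhq hx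
  rw [hhx, ENNReal.ofReal_div_of_pos hγpos, hDof, hswap, tsum_congr hinner]
  have hfinal : ∀ n : ℕ, ((∑' m, oP (n+1+m) * Q ^ m) / ENNReal.ofReal γ) * X ^ n
      = ((∑' m, oP (n+1+m) * Q ^ m) * X ^ n) * (ENNReal.ofReal γ)⁻¹ := by
    intro n
    rw [div_eq_mul_inv]
    ring
  rw [tsum_congr hfinal, ENNReal.tsum_mul_right, ← div_eq_mul_inv]

theorem rep_P (hp : ∀ k, 0 ≤ p k) (hple : ∀ k, p k ≤ 1) (hε : ε ∈ Set.Ioo (0 : ℝ) 1)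
    (hsum : HasSum p (1 - ε)) (hq : q ∈ Set.Ico (0:ℝ) 1)
    (hf : ∀ s : ℝ, f s = ∑' k, p k * s ^ k) (hfix : f q = q)
    (hγ : γ = deriv f q) (hγpos : 0 < γ)
    (hh : ∀ s : ℝ, s ≠ q → h s = (f s - q) / ((s - q) * γ)) (hhq : h q = 1) :
    ∀ t, ∃ c : ℕ → ℝ≥0∞, IsRep (fun x => ∏ j ∈ Finset.range t, h (f^[j] x)) c := by
  have hrepf : IsRep f (fun k => ENNReal.ofReal (p k)) := rep_f hp hsum.summable hf
  have hmapsf : ∀ x ∈ Set.Icc (0:ℝ) 1, f x ∈ Set.Icc (0:ℝ) 1 :=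
    fun x hx => f_maps hp hε hsum hf hx
  have hreph : IsRep h _ := rep_h hp hple hsum.summable hq hf hfix hγ hγpos hh hhq
  -- iterates are representable
  have hiter : ∀ j, ∃ d : ℕ → ℝ≥0∞, IsRep (fun x => f^[j] x) d := by
    intro j
    induction j with
    | zero =>
        refine ⟨fun n => if n = 1 then 1 else 0, ?_⟩
        intro x hx
        simp only [Function.iterate_zero, id_eq]
        have : ∀ n : ℕ, (if n = 1 then (1:ℝ≥0∞) else 0) * (ENNReal.ofReal x) ^ n
            = if n = 1 then ENNReal.ofReal x else 0 := by
          intro n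
          rcases eq_or_ne n 1 with rfl | hne
          · simp
          · simp [hne]
        rw [tsum_congr this, tsum_ite_eq 1 (fun _ => ENNReal.ofReal x)]
    | succ j ih =>
        obtain ⟨d, hd⟩ := ih
        have hmapsj : ∀ x ∈ Set.Icc (0:ℝ) 1, f^[j] x ∈ Set.Icc (0:ℝ) 1 :=
          fun x hx => iter_I hp hε hsum hf hx j
        have hcomp := isRep_comp hrepf hd hmapsj
        refine ⟨fun n => ∑' i, ENNReal.ofReal (p i) * cpow d i n, fun x hx => ?_⟩
        simp only [Function.iterate_succ_apply']
        exact hcomp x hx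
  intro t
  induction t with
  | zero =>
      refine ⟨fun n => if n = 0 then 1 else 0, ?_⟩
      intro x hx
      simpa using isRep_one x hx
  | succ t ih =>
      obtain ⟨c, hc⟩ := ih
      obtain ⟨d, hd⟩ := hiter t
      have hmapsj : ∀ x ∈ Set.Icc (0:ℝ) 1, f^[t] x ∈ Set.Icc (0:ℝ) 1 :=
        fun x hx => iter_I hp hε hsum hf hx t
      have hcomp : IsRep (fun x => h (f^[t] x)) _ := isRep_comp hreph hd hmapsj
      have hP0 : ∀ x ∈ Set.Icc (0:ℝ) 1, 0 ≤ ∏ j ∈ Finset.range t, h (f^[j] x) :=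
        fun x hx => P_nonneg hp hple hε hsum hq hf hfix hγ hγpos hh hhq hx t
      have hmul := isRep_mul hc hcomp hP0
      refine ⟨cmul c (fun n => ∑' i,
        ((∑' m, ENNReal.ofReal (p (i+1+m)) * (ENNReal.ofReal q) ^ m) / ENNReal.ofReal γ)
          * cpow d i n), fun x hx => ?_⟩
      simp only [Finset.prod_range_succ]
      exact hmul x hx

theorem rep_toReal {g : ℝ → ℝ} {c : ℕ → ℝ≥0∞} (hrep : IsRep g c)
    (hg0 : ∀ x ∈ Set.Icc (0:ℝ) 1, 0 ≤ g x) {x : ℝ} (hx : x ∈ Set.Icc (0:ℝ) 1) :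
    g x = ∑' n, (c n).toReal * x ^ n ∧ Summable (fun n => (c n).toReal * x ^ n) := by
  have h1I : (1:ℝ) ∈ Set.Icc (0:ℝ) 1 := ⟨zero_le_one, le_refl 1⟩
  have hfin1 : (∑' n, c n) ≠ ⊤ := by
    have := hrep 1 h1I
    simp only [ENNReal.ofReal_one, one_pow, mul_one] at this
    rw [← this]
    exact ENNReal.ofReal_ne_top
  have hcfin : ∀ n, c n ≠ ⊤ := fun n =>
    ne_top_of_le_ne_top hfin1 (ENNReal.le_tsum n)
  have hXfin : ∀ n : ℕ, (ENNReal.ofReal x) ^ n ≠ ⊤ :=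
    fun n => pow_ne_top ENNReal.ofReal_ne_top
  have htermfin : ∀ n, c n * (ENNReal.ofReal x) ^ n ≠ ⊤ :=
    fun n => ENNReal.mul_ne_top (hcfin n) (hXfin n)
  have hfinx : (∑' n, c n * (ENNReal.ofReal x) ^ n) ≠ ⊤ := by
    rw [← hrep x hx]; exact ENNReal.ofReal_ne_top
  have hterm : ∀ n, (c n * (ENNReal.ofReal x) ^ n).toReal = (c n).toReal * x ^ n := by
    intro n
    rw [ENNReal.toReal_mul, ENNReal.toReal_pow, ENNReal.toReal_ofReal hx.1]
  constructor
  · calc g x = (ENNReal.ofReal (g x)).toReal := (ENNReal.toReal_ofReal (hg0 x hx)).symm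
      _ = (∑' n, c n * (ENNReal.ofReal x) ^ n).toReal := by rw [hrep x hx]
      _ = ∑' n, (c n * (ENNReal.ofReal x) ^ n).toReal := ENNReal.tsum_toReal_eq htermfin
      _ = ∑' n, (c n).toReal * x ^ n := tsum_congr hterm
  · have := ENNReal.summable_toReal hfinx
    exact this.congr hterm

end MainH

end PGFAux
open PGFAux in
/-- Proposition 1(a): for a defective probability generating function `f` with smallest
fixed point `q` and `γ = f'(q) > 0`, the products `∏_{j<t} h(f^[j] s)` converge to a
limit `H s`; `H q = 1`, `H` is a power series with nonnegative coefficients on `[0,1]`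
(in particular `H 1` is finite), and `(f^[t] s - q)/γ^t → (s - q) * H s`. -/
theorem stmt_0
    (p : ℕ → ℝ) (ε : ℝ) (f : ℝ → ℝ) (q γ : ℝ) (h : ℝ → ℝ)
    (hp : ∀ k, 0 ≤ p k) (hε : ε ∈ Set.Ioo (0 : ℝ) 1)
    (hsum : HasSum p (1 - ε))
    (hf : ∀ s : ℝ, f s = ∑' k, p k * s ^ k)
    (hq : q ∈ Set.Ico (0 : ℝ) 1) (hfix : f q = q)
    (hqmin : ∀ x ∈ Set.Icc (0 : ℝ) 1, f x = x → q ≤ x)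
    (hγ : γ = deriv f q) (hγpos : 0 < γ)
    (hh : ∀ s : ℝ, s ≠ q → h s = (f s - q) / ((s - q) * γ))
    (hhq : h q = 1) :
    ∃ H : ℝ → ℝ,
      (∀ s ∈ Set.Icc (0 : ℝ) 1,
          Tendsto (fun t : ℕ => ∏ j ∈ range t, h (f^[j] s)) atTop (nhds (H s))) ∧
      H q = 1 ∧
      (∃ a : ℕ → ℝ, (∀ n, 0 ≤ a n) ∧
          ∀ s ∈ Set.Icc (0 : ℝ) 1, H s = ∑' n, a n * s ^ n) ∧
      (∀ s ∈ Set.Icc (0 : ℝ) 1,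
          Tendsto (fun t : ℕ => (f^[t] s - q) / γ ^ t) atTop
            (nhds ((s - q) * H s))) := by
  classical
  have hqI : q ∈ Set.Icc (0:ℝ) 1 := ⟨hq.1, le_of_lt hq.2⟩
  have h1I : (1:ℝ) ∈ Set.Icc (0:ℝ) 1 := ⟨zero_le_one, le_refl 1⟩
  have hple : ∀ k, p k ≤ 1 := by
    intro k
    have h1 : p k ≤ ∑' k, p k := Summable.le_tsum hsum.summable k (fun j _ => hp j)
    rw [hsum.tsum_eq] at h1
    linarith [hε.1]
  have hγ0 : γ ≠ 0 := ne_of_gt hγpos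
  -- existence of limits
  have hex : ∀ s ∈ Set.Icc (0:ℝ) 1,
      ∃ L, Tendsto (fun t : ℕ => ∏ j ∈ range t, h (f^[j] s)) atTop (nhds L) :=
    fun s hs => P_conv hp hple hε hsum hq hf hfix hγ hγpos hh hhq hs
  choose! L hL using hex
  refine ⟨L, hL, ?_, ?_, ?_⟩
  · -- H q = 1
    have hPq : (fun t : ℕ => ∏ j ∈ range t, h (f^[j] q)) = fun _ => (1:ℝ) := by
      funext t
      exact Finset.prod_eq_one fun j _ => by rw [iter_fix hfix j, hhq]
    have h2 : Tendsto (fun t : ℕ => ∏ j ∈ range t, h (f^[j] q)) atTop (nhds 1) := by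
      rw [hPq]; exact tendsto_const_nhds
    exact tendsto_nhds_unique (hL q hqI) h2
  · -- power series representation
    have hrepP := rep_P hp hple hε hsum hq hf hfix hγ hγpos hh hhq
    choose cP hcP using hrepP
    set U : Ultrafilter ℕ := Ultrafilter.of atTop with hU
    have hUle : (U : Filter ℕ) ≤ atTop := Ultrafilter.of_le _
    set A : ℕ → ℝ≥0∞ := fun n => (Ultrafilter.map (fun t => cP t n) U).lim with hA
    have hAt : ∀ n, Tendsto (fun t => cP t n) (U : Filter ℕ) (nhds (A n)) := by
      intro n
      have := Ultrafilter.le_nhds_lim (Ultrafilter.map (fun t => cP t n) U)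
      rwa [Ultrafilter.coe_map] at this
    -- bounds
    have hL1nn : 0 ≤ L 1 :=
      ge_of_tendsto (hL 1 h1I)
        (Filter.Eventually.of_forall fun t =>
          P_nonneg hp hple hε hsum hq hf hfix hγ hγpos hh hhq h1I t)
    have hPle : ∀ t, (∏ j ∈ range t, h (f^[j] (1:ℝ))) ≤ L 1 :=
      Monotone.ge_of_tendsto
        (P_mono_q1 hp hple hε hsum hq hf hfix hγ hγpos hh hhq ⟨le_of_lt hq.2, le_refl 1⟩)
        (hL 1 h1I)
    have hP0 : ∀ t, ∀ x ∈ Set.Icc (0:ℝ) 1, 0 ≤ ∏ j ∈ range t, h (f^[j] x) :=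
      fun t x hx => P_nonneg hp hple hε hsum hq hf hfix hγ hγpos hh hhq hx t
    have hreal : ∀ t, ∀ x ∈ Set.Icc (0:ℝ) 1,
        (∏ j ∈ range t, h (f^[j] x)) = ∑' n, (cP t n).toReal * x ^ n ∧
          Summable (fun n => (cP t n).toReal * x ^ n) :=
      fun t x hx => rep_toReal (hcP t) (fun y hy => hP0 t y hy) hx
    have hbound : ∀ t n, cP t n ≤ ENNReal.ofReal (L 1) := by
      intro t n
      have h1 : cP t n ≤ ∑' m, cP t m := ENNReal.le_tsum n
      have h2 : (∑' m, cP t m) = ENNReal.ofReal (∏ j ∈ range t, h (f^[j] (1:ℝ))) := by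
        have := hcP t 1 h1I
        simp only [ENNReal.ofReal_one, one_pow, mul_one] at this
        exact this.symm
      calc cP t n ≤ ∑' m, cP t m := h1
        _ = ENNReal.ofReal (∏ j ∈ range t, h (f^[j] (1:ℝ))) := h2
        _ ≤ ENNReal.ofReal (L 1) := ENNReal.ofReal_le_ofReal (hPle t)
    have hAfin : ∀ n, A n ≠ ⊤ := by
      intro n
      have hle : A n ≤ ENNReal.ofReal (L 1) :=
        le_of_tendsto (hAt n) (Filter.Eventually.of_forall fun t => hbound t n)
      exact ne_top_of_le_ne_top ENNReal.ofReal_ne_top hle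
    set a : ℕ → ℝ := fun n => (A n).toReal with ha
    have ha0 : ∀ n, 0 ≤ a n := fun n => ENNReal.toReal_nonneg
    have rconv : ∀ n, Tendsto (fun t => (cP t n).toReal) (U : Filter ℕ) (nhds (a n)) :=
      fun n => (ENNReal.tendsto_toReal (hAfin n)).comp (hAt n)
    have rbound : ∀ t n, (cP t n).toReal ≤ L 1 :=
      fun t n => ENNReal.toReal_le_of_le_ofReal hL1nn (hbound t n)
    -- case x < 1
    have hcase_lt : ∀ x ∈ Set.Icc (0:ℝ) 1, x < 1 → L x = ∑' n, a n * x ^ n := by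
      intro x hx hxlt
      have hgeom : Summable (fun n : ℕ => L 1 * x ^ n) :=
        (summable_geometric_of_lt_one hx.1 hxlt).mul_left _
      have key := tendsto_tsum_of_dominated_convergence (𝓕 := (U : Filter ℕ))
        (f := fun t n => (cP t n).toReal * x ^ n) (g := fun n => a n * x ^ n)
        (bound := fun n => L 1 * x ^ n) hgeom
        (fun n => (rconv n).mul_const (x ^ n))
        (Filter.Eventually.of_forall fun t n => by
          rw [Real.norm_eq_abs,
            abs_of_nonneg (mul_nonneg ENNReal.toReal_nonneg (pow_nonneg hx.1 n))]
          exact mul_le_mul_of_nonneg_right (rbound t n) (pow_nonneg hx.1 n))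
      have key2 : Tendsto (fun t => ∏ j ∈ range t, h (f^[j] x)) (U : Filter ℕ)
          (nhds (∑' n, a n * x ^ n)) := by
        refine key.congr fun t => ?_
        exact ((hreal t x hx).1).symm
      exact tendsto_nhds_unique ((hL x hx).mono_left hUle) key2
    -- partial sums of a are bounded
    have hparta : ∀ N, ∑ n ∈ range N, a n ≤ L 1 := by
      intro N
      have htend : Tendsto (fun t => ∑ n ∈ range N, (cP t n).toReal) (U : Filter ℕ)
          (nhds (∑ n ∈ range N, a n)) :=
        tendsto_finset_sum _ (fun n _ => rconv n)
      refine le_of_tendsto htend (Filter.Eventually.of_forall fun t => ?_)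
      have hr1 := hreal t 1 h1I
      have hsum1 : Summable (fun n => (cP t n).toReal * (1:ℝ) ^ n) := hr1.2
      calc ∑ n ∈ range N, (cP t n).toReal
          = ∑ n ∈ range N, (cP t n).toReal * (1:ℝ) ^ n := by simp
        _ ≤ ∑' n, (cP t n).toReal * (1:ℝ) ^ n :=
            Summable.sum_le_tsum _ (fun n _ =>
              mul_nonneg ENNReal.toReal_nonneg (pow_nonneg zero_le_one n)) hsum1
        _ = ∏ j ∈ range t, h (f^[j] (1:ℝ)) := hr1.1.symm
        _ ≤ L 1 := hPle t
    have hasum : Summable a := summable_of_sum_range_le ha0 hparta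
    have htsuma : ∑' n, a n ≤ L 1 := Real.tsum_le_of_sum_range_le ha0 hparta
    -- case x = 1
    have hcase_1 : L 1 = ∑' n, a n := by
      refine le_antisymm ?_ htsuma
      refine le_of_tendsto (hL 1 h1I) (Filter.Eventually.of_forall fun t => ?_)
      have hr1 := hreal t 1 h1I
      have hP1 : (∏ j ∈ range t, h (f^[j] (1:ℝ))) = ∑' n, (cP t n).toReal := by
        rw [hr1.1]; simp
      rw [hP1]
      refine Real.tsum_le_of_sum_range_le (fun n => ENNReal.toReal_nonneg) fun N => ?_
      -- partial sums at s < 1, then s → 1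
      have hpart : ∀ s ∈ Set.Ioo q 1,
          ∑ n ∈ range N, (cP t n).toReal * s ^ n ≤ ∑' n, a n := by
        intro s hs
        have hsq1 : s ∈ Set.Icc q 1 := ⟨le_of_lt hs.1, le_of_lt hs.2⟩
        have hsI : s ∈ Set.Icc (0:ℝ) 1 := ⟨le_trans hq.1 hsq1.1, hsq1.2⟩
        have hrs := hreal t s hsI
        calc ∑ n ∈ range N, (cP t n).toReal * s ^ n
            ≤ ∑' n, (cP t n).toReal * s ^ n :=
              Summable.sum_le_tsum _ (fun n _ =>
                mul_nonneg ENNReal.toReal_nonneg (pow_nonneg hsI.1 n)) hrs.2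
          _ = ∏ j ∈ range t, h (f^[j] s) := hrs.1.symm
          _ ≤ L s := Monotone.ge_of_tendsto
              (P_mono_q1 hp hple hε hsum hq hf hfix hγ hγpos hh hhq hsq1) (hL s hsI) t
          _ = ∑' n, a n * s ^ n := hcase_lt s hsI hs.2
          _ ≤ ∑' n, a n := by
              refine Summable.tsum_le_tsum (fun n => ?_) ?_ hasum
              · calc a n * s ^ n ≤ a n * 1 :=
                    mul_le_mul_of_nonneg_left (pow_le_one₀ hsI.1 hsI.2) (ha0 n)
                  _ = a n := mul_one _
              · exact Summable.of_nonneg_of_le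
                  (fun n => mul_nonneg (ha0 n) (pow_nonneg hsI.1 n))
                  (fun n => by
                    calc a n * s ^ n ≤ a n * 1 :=
                        mul_le_mul_of_nonneg_left (pow_le_one₀ hsI.1 hsI.2) (ha0 n)
                      _ = a n := mul_one _) hasum
      have hcont : Continuous (fun s : ℝ => ∑ n ∈ range N, (cP t n).toReal * s ^ n) :=
        continuous_finset_sum _ fun n _ => continuous_const.mul (continuous_pow n)
      have htend1 : Tendsto (fun s : ℝ => ∑ n ∈ range N, (cP t n).toReal * s ^ n)
          (nhdsWithin 1 (Set.Iio 1)) (nhds (∑ n ∈ range N, (cP t n).toReal * (1:ℝ) ^ n)) :=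
        (hcont.tendsto 1).mono_left nhdsWithin_le_nhds
      have hev : ∀ᶠ s in nhdsWithin (1:ℝ) (Set.Iio 1),
          ∑ n ∈ range N, (cP t n).toReal * s ^ n ≤ ∑' n, a n := by
        filter_upwards [Ioo_mem_nhdsLT_of_mem (show (1:ℝ) ∈ Set.Ioc q 1 from ⟨hq.2, le_refl 1⟩)]
          with s hs
        exact hpart s hs
      have := le_of_tendsto htend1 hev
      simpa using this
    refine ⟨a, ha0, fun x hx => ?_⟩
    rcases lt_or_eq_of_le hx.2 with hlt | heq
    · exact hcase_lt x hx hlt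
    · rw [heq, hcase_1]
      simp
  · -- convergence of (f^[t] s - q)/γ^t
    intro s hs
    have hid := key_identity hp hple hε hsum hq hf hfix hγ hγpos hh hhq hs
    have heq : (fun t : ℕ => (f^[t] s - q) / γ ^ t)
        = fun t : ℕ => (s - q) * ∏ j ∈ range t, h (f^[j] s) := by
      funext t
      rw [hid t, mul_comm (γ ^ t), ← mul_assoc, mul_div_assoc,
        div_self (pow_ne_zero t hγ0), mul_one]
    rw [heq]
    exact (hL s hs).const_mul (s - q)
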